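/- (Proposition: strict dual feasibility from block equations.) Let V be a finite index set, S ⊆ V, Q : V×V → ℝ a matrix whose principal submatrix Q_{SS} is invertible, and let W, R, Z, Δ : V → ℝ be vectors with Δ_t = 0 for all t ∉ S. Let λ > 0 and α ∈ (0, 1]. Assume: (i) for every t ∈ V, (Q·Δ)_t = W_t − λ·Z_t + R_t; (ii) |Z_t| ≤ 1 for all t ∈ S; (iii) incoherence: for every t ∉ S, Σ_{s∈S} |(Q_{S^cS}·Q_{SS}⁻¹)_{t,s}| ≤ 1 − α; (iv) max_{t∈V} |W_t| ≤ λα/(4(2−α)) and max_{t∈V} |R_t| ≤ λα/(4(2−α)). Then for every t ∉ S, |Z_t| ≤ 1 − α/2 < 1. -/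

import Mathlib

open Matrix

/-- **strict dual feasibility from block equations.** Deterministic linear-algebra
step of the primal–dual witness argument: from the block equations `Q·Δ = W − λ·Z + R` with
`Δ` supported on `S`, invertibility of `Q_{SS}`, dual feasibility `|Z_t| ≤ 1` on `S`,
incoherence `‖Q_{S^cS}·Q_{SS}⁻¹‖_{∞,row} ≤ 1 − α`, and
`‖W‖_∞, ‖R‖_∞ ≤ λα/(4(2−α))`, one gets `|Z_t| ≤ 1 − α/2 < 1` for every `t ∉ S`. -/
theorem strict_dual_feasibility_block
    {V : Type*} [Fintype V] [DecidableEq V]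
    (S : Finset V) (Q : Matrix V V ℝ)
    (Qss : Matrix {x // x ∈ S} {x // x ∈ S} ℝ)
    (hQss : Qss = Q.submatrix (fun s : {x // x ∈ S} => (s : V)) (fun s : {x // x ∈ S} => (s : V)))
    (hinv : IsUnit Qss)
    (W R Z Δ : V → ℝ)
    (hΔ : ∀ t ∉ S, Δ t = 0)
    (lam α : ℝ) (hlam : 0 < lam) (hα : 0 < α) (hα1 : α ≤ 1)
    (heq : ∀ t, Q.mulVec Δ t = W t - lam * Z t + R t)
    (hZS : ∀ t ∈ S, |Z t| ≤ 1)
    (hinc : ∀ t ∉ S,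
      ∑ s : {x // x ∈ S}, |∑ s' : {x // x ∈ S}, Q t (s' : V) * (Qss⁻¹ s' s)| ≤ 1 - α)
    (hW : ∀ t, |W t| ≤ lam * α / (4 * (2 - α)))
    (hR : ∀ t, |R t| ≤ lam * α / (4 * (2 - α))) :
    ∀ t ∉ S, |Z t| ≤ 1 - α / 2 ∧ |Z t| < 1 := by
  set ε := lam * α / (4 * (2 - α)) with hε
  have h2α : (0:ℝ) < 2 - α := by linarith
  have hεpos : 0 ≤ ε := by positivity
  have hdet : IsUnit Qss.det := (Matrix.isUnit_iff_isUnit_det Qss).mp hinv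
  have hQQ : Qss⁻¹ * Qss = 1 := Matrix.nonsing_inv_mul Qss hdet
  set u : {x // x ∈ S} → ℝ := fun s => W s - lam * Z s + R s with hu
  set d : {x // x ∈ S} → ℝ := fun s => Δ s with hd
  -- restrict mulVec to S
  have hsum : ∀ t : V, Q.mulVec Δ t = ∑ s : {x // x ∈ S}, Q t s * Δ s := by
    intro t
    rw [Matrix.mulVec, dotProduct]
    rw [Finset.sum_coe_sort S (fun s => Q t s * Δ s)]
    symm
    apply Finset.sum_subset (Finset.subset_univ S)
    intro x _ hx
    rw [hΔ x hx, mul_zero]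
  have hmul : Qss.mulVec d = u := by
    funext s
    have : Qss.mulVec d s = Q.mulVec Δ (s : V) := by
      rw [hsum, hQss, Matrix.mulVec, dotProduct]
      rfl
    rw [this, heq]
  have hdeq : d = Qss⁻¹.mulVec u := by
    rw [← hmul, Matrix.mulVec_mulVec, hQQ, Matrix.one_mulVec]
  -- bound on u
  have hub : ∀ s : {x // x ∈ S}, |u s| ≤ lam + 2 * ε := by
    intro s
    have h1 := hW (s : V)
    have h2 := hR (s : V)
    have h3 := hZS (s : V) s.2
    have h4 : |lam * Z (s : V)| = lam * |Z (s : V)| := by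
      rw [abs_mul, abs_of_pos hlam]
    calc |u s| ≤ |W (s:V)| + |lam * Z (s:V)| + |R (s:V)| := by
          simp only [hu]; exact (abs_add_le _ _).trans (by gcongr; exact abs_sub _ _)
      _ ≤ ε + lam * 1 + ε := by
          rw [h4]; gcongr
      _ = lam + 2 * ε := by ring
  intro t ht
  -- main identity
  have hkey : Q.mulVec Δ t
      = ∑ s : {x // x ∈ S}, (∑ s' : {x // x ∈ S}, Q t (s' : V) * (Qss⁻¹ s' s)) * u s := by
    rw [hsum t]
    have : ∀ s : {x // x ∈ S}, Δ (s : V) = Qss⁻¹.mulVec u s := fun s =>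
      congrFun hdeq s
    calc ∑ s : {x // x ∈ S}, Q t s * Δ s
        = ∑ s : {x // x ∈ S}, Q t s * ∑ s' : {x // x ∈ S}, Qss⁻¹ s s' * u s' := by
          refine Finset.sum_congr rfl fun s _ => ?_
          rw [this s, Matrix.mulVec, dotProduct]
      _ = ∑ s : {x // x ∈ S}, ∑ s' : {x // x ∈ S}, Q t s * Qss⁻¹ s s' * u s' := by
          refine Finset.sum_congr rfl fun s _ => ?_
          rw [Finset.mul_sum]
          exact Finset.sum_congr rfl fun s' _ => (mul_assoc _ _ _).symm
      _ = ∑ s' : {x // x ∈ S}, (∑ s : {x // x ∈ S}, Q t (s : V) * (Qss⁻¹ s s')) * u s' := by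
          rw [Finset.sum_comm]
          refine Finset.sum_congr rfl fun s' _ => ?_
          rw [Finset.sum_mul]
  have hZeq : lam * Z t = W t + R t
      - ∑ s : {x // x ∈ S}, (∑ s' : {x // x ∈ S}, Q t (s' : V) * (Qss⁻¹ s' s)) * u s := by
    have := heq t
    rw [hkey] at this
    linarith
  have hbound : |lam * Z t| ≤ 2 * ε + (1 - α) * (lam + 2 * ε) := by
    rw [hZeq]
    have hsumb : |∑ s : {x // x ∈ S}, (∑ s' : {x // x ∈ S}, Q t (s' : V) * (Qss⁻¹ s' s)) * u s|
        ≤ (1 - α) * (lam + 2 * ε) := by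
      calc |∑ s : {x // x ∈ S}, (∑ s' : {x // x ∈ S}, Q t (s' : V) * (Qss⁻¹ s' s)) * u s|
          ≤ ∑ s : {x // x ∈ S}, |(∑ s' : {x // x ∈ S}, Q t (s' : V) * (Qss⁻¹ s' s)) * u s| :=
            Finset.abs_sum_le_sum_abs _ _
        _ ≤ ∑ s : {x // x ∈ S}, |∑ s' : {x // x ∈ S}, Q t (s' : V) * (Qss⁻¹ s' s)| * (lam + 2*ε) := by
            refine Finset.sum_le_sum fun s _ => ?_
            rw [abs_mul]
            exact mul_le_mul_of_nonneg_left (hub s) (abs_nonneg _)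
        _ = (∑ s : {x // x ∈ S}, |∑ s' : {x // x ∈ S}, Q t (s' : V) * (Qss⁻¹ s' s)|) * (lam + 2*ε) := by
            rw [Finset.sum_mul]
        _ ≤ (1 - α) * (lam + 2 * ε) := by
            have := hinc t ht
            have hpos : 0 ≤ lam + 2 * ε := by linarith
            exact mul_le_mul_of_nonneg_right this hpos
    calc |W t + R t - ∑ s : {x // x ∈ S}, (∑ s' : {x // x ∈ S}, Q t (s' : V) * (Qss⁻¹ s' s)) * u s|
        ≤ |W t + R t| + |∑ s : {x // x ∈ S}, (∑ s' : {x // x ∈ S}, Q t (s' : V) * (Qss⁻¹ s' s)) * u s| :=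
          abs_sub _ _
      _ ≤ (|W t| + |R t|) + (1 - α) * (lam + 2 * ε) := add_le_add (abs_add_le _ _) hsumb
      _ ≤ 2 * ε + (1 - α) * (lam + 2 * ε) := by have := hW t; have := hR t; linarith
  have hεval : ε * (4 * (2 - α)) = lam * α := by
    rw [hε, div_mul_cancel₀ _ (mul_pos (by norm_num) h2α).ne']
  have hZb : |Z t| ≤ 1 - α / 2 := by
    have h5 : |lam * Z t| ≤ lam * (1 - α / 2) := by
      calc |lam * Z t| ≤ 2 * ε + (1 - α) * (lam + 2 * ε) := hbound
        _ ≤ lam * (1 - α / 2) := by nlinarith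
    rw [abs_mul, abs_of_pos hlam] at h5
    exact le_of_mul_le_mul_left h5 hlam
  exact ⟨hZb, lt_of_le_of_lt hZb (by linarith)⟩
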